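/- arXiv:2002.11440 — 2 statements merged into one kernel-verified Lean document; each statement's English description precedes it below -/
import Mathlib

section
/- Let f : ℝ^d → ℝ be convex with ‖∇f(x)‖₁ ≤ B for all x. Run the SGD-BGO recursion x_{k+1} = x_k − γ_k g_k with an oracle of type (O1), step sizes γ_k > 0, perturbation constants η_k > 0 and batch sizes m_k > 0, and suppose ‖x_k − x_{k₀}‖ ≤ D for all k (D bounds the iterate distances). Then for any indices 1 < k₀ < k₁ ≤ N, Σ_{k=k₀}^{k₁} 2 γ_k E[f(x_k) − f(x_{k₀})] ≤ Σ_{k=k₀}^{k₁} ( 2√d γ_k D E_k + γ_k² B_k² ), where E_k = c₁ η_k² + c₃/(η_k √m_k) and B_k² = B² + 2√d B E_k + d E_k² + c₂/η_k². -/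
open MeasureTheory Real
open scoped BigOperators
open scoped RealInnerProductSpace

noncomputable section


lemma euclid_norm_le_sum_abs {d : ℕ} (v : EuclideanSpace ℝ (Fin d)) :
    ‖v‖ ≤ ∑ i, |v i| := by
  rw [EuclideanSpace.norm_eq]
  have h1 : ∑ i, ‖v i‖ ^ 2 ≤ (∑ i, |v i|) ^ 2 := by
    simpa [Real.norm_eq_abs] using
      Finset.sum_sq_le_sq_sum_of_nonneg (s := Finset.univ) (f := fun i => |v i|)
        (fun i _ => abs_nonneg _)
  calc Real.sqrt (∑ i, ‖v i‖ ^ 2) ≤ Real.sqrt ((∑ i, |v i|) ^ 2) := Real.sqrt_le_sqrt h1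
    _ = ∑ i, |v i| := Real.sqrt_sq (Finset.sum_nonneg fun i _ => abs_nonneg _)

lemma euclid_norm_le_sqrt_card {d : ℕ} (v : EuclideanSpace ℝ (Fin d)) {E : ℝ}
    (hE : 0 ≤ E) (h : ∀ i, |v i| ≤ E) : ‖v‖ ≤ Real.sqrt d * E := by
  rw [EuclideanSpace.norm_eq]
  have h1 : ∑ i, ‖v i‖ ^ 2 ≤ (d : ℝ) * E ^ 2 := by
    calc ∑ i, ‖v i‖ ^ 2 ≤ ∑ _i : Fin d, E ^ 2 := by
          refine Finset.sum_le_sum fun i _ => ?_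
          rw [Real.norm_eq_abs]
          exact pow_le_pow_left₀ (abs_nonneg _) (h i) 2
      _ = (d : ℝ) * E ^ 2 := by simp [mul_comm]
  calc Real.sqrt (∑ i, ‖v i‖ ^ 2) ≤ Real.sqrt ((d : ℝ) * E ^ 2) := Real.sqrt_le_sqrt h1
    _ = Real.sqrt d * E := by
        rw [Real.sqrt_mul (Nat.cast_nonneg d), Real.sqrt_sq hE]

lemma convex_grad_ineq {d : ℕ} {f : EuclideanSpace ℝ (Fin d) → ℝ}
    (hf : Differentiable ℝ f) (hconv : ConvexOn ℝ Set.univ f)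
    (x y : EuclideanSpace ℝ (Fin d)) :
    f x - f y ≤ ⟪gradient f x, x - y⟫ := by
  rcases eq_or_ne y x with rfl | hne
  · simp
  · set v := y - x with hv
    have hφ : ConvexOn ℝ Set.univ (fun t : ℝ => f (x + t • v)) := by
      refine ⟨convex_univ, fun t1 _ t2 _ a b ha hb hab => ?_⟩
      have harg : x + (a • t1 + b • t2) • v
          = a • (x + t1 • v) + b • (x + t2 • v) := by
        have h1 : x + (a • t1 + b • t2) • v
            = (a + b) • x + (a • t1 + b • t2) • v := by rw [hab, one_smul]
        rw [h1, smul_eq_mul, smul_eq_mul]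
        module
      have h2 := hconv.2 (Set.mem_univ (x + t1 • v)) (Set.mem_univ (x + t2 • v))
        ha hb hab
      calc (fun t => f (x + t • v)) (a • t1 + b • t2)
          = f (a • (x + t1 • v) + b • (x + t2 • v)) := by
            simp only []; rw [← harg]
        _ ≤ a • f (x + t1 • v) + b • f (x + t2 • v) := h2
        _ = a • (fun t => f (x + t • v)) t1 + b • (fun t => f (x + t • v)) t2 := rfl
    have hd : HasDerivAt (fun t : ℝ => f (x + t • v)) ⟪gradient f x, v⟫ 0 := by
      have hline : HasDerivAt (fun t : ℝ => x + t • v) v 0 := by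
        simpa using ((hasDerivAt_id (0:ℝ)).smul_const v).const_add x
      have hfd : HasFDerivAt f ((InnerProductSpace.toDual ℝ _) (gradient f x)) x :=
        hasGradientAt_iff_hasFDerivAt.mp (hf x).hasGradientAt
      have hfd' : HasFDerivAt f ((InnerProductSpace.toDual ℝ _) (gradient f x))
          (x + (0:ℝ) • v) := by simpa using hfd
      have := hfd'.comp_hasDerivAt (0:ℝ) hline
      simpa [InnerProductSpace.toDual_apply_apply, Function.comp_def] using this
    have h01 : (0:ℝ) < 1 := one_pos
    have := hφ.le_slope_of_hasDerivAt (Set.mem_univ (0:ℝ)) (Set.mem_univ (1:ℝ)) h01 hd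
    rw [slope_def_field] at this
    simp only [zero_smul, add_zero, one_smul, sub_zero, div_one] at this
    have h2 : f x - f (x + v) ≤ -⟪gradient f x, v⟫ := by linarith
    have h3 : x + v = y := by simp [hv]
    rw [h3] at h2
    calc f x - f y ≤ -⟪gradient f x, v⟫ := h2
      _ = ⟪gradient f x, x - y⟫ := by rw [hv]; rw [← inner_neg_right]; congr 1; module


variable {Ω : Type*} {m : MeasurableSpace Ω} {mΩ : MeasurableSpace Ω}
  {μ : Measure Ω} [IsProbabilityMeasure μ] {d : ℕ}

lemma condexp_euclid_coord (hm : m ≤ mΩ)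
    {g : Ω → EuclideanSpace ℝ (Fin d)} (hg : Integrable g μ) (i : Fin d) :
    (fun ω => (μ[g|m]) ω i) =ᵐ[μ] μ[fun ω => g ω i|m] := by
  haveI : SigmaFinite (μ.trim hm) := by
    have : IsFiniteMeasure (μ.trim hm) := isFiniteMeasure_trim hm
    infer_instance
  set L : EuclideanSpace ℝ (Fin d) →L[ℝ] ℝ := EuclideanSpace.proj i with hL
  refine ae_eq_condExp_of_forall_setIntegral_eq hm (L.integrable_comp hg)
    (fun s hs hμs => ((L.integrable_comp integrable_condExp).integrableOn))
    (fun s hs hμs => ?_) ?_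
  · have h1 : ∫ ω in s, L ((μ[g|m]) ω) ∂μ = L (∫ ω in s, (μ[g|m]) ω ∂μ) :=
      L.integral_comp_comm integrable_condExp.integrableOn
    have h2 : ∫ ω in s, L (g ω) ∂μ = L (∫ ω in s, g ω ∂μ) :=
      L.integral_comp_comm hg.integrableOn
    show ∫ ω in s, L ((μ[g|m]) ω) ∂μ = ∫ ω in s, L (g ω) ∂μ
    rw [h1, h2, setIntegral_condExp hm hg hs]
  · exact (L.continuous.comp_stronglyMeasurable stronglyMeasurable_condExp).aestronglyMeasurable

lemma euclid_coord_le_norm (v : EuclideanSpace ℝ (Fin d)) (i : Fin d) :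
    ‖v i‖ ≤ ‖v‖ := by
  rw [EuclideanSpace.norm_eq, show ‖v i‖ = Real.sqrt (‖v i‖ ^ 2) from
    (Real.sqrt_sq (norm_nonneg _)).symm]
  exact Real.sqrt_le_sqrt (Finset.single_le_sum
    (f := fun j => ‖v j‖ ^ 2) (fun j _ => sq_nonneg _) (Finset.mem_univ i))

lemma integral_inner_condexp (hm : m ≤ mΩ)
    {g h : Ω → EuclideanSpace ℝ (Fin d)} (hg : Integrable g μ)
    (hh : StronglyMeasurable[m] h) {C : ℝ} (hC : ∀ᵐ ω ∂μ, ‖h ω‖ ≤ C) :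
    ∫ ω, ⟪g ω, h ω⟫ ∂μ = ∫ ω, ⟪(μ[g|m]) ω, h ω⟫ ∂μ := by
  haveI : SigmaFinite (μ.trim hm) := by
    have : IsFiniteMeasure (μ.trim hm) := isFiniteMeasure_trim hm
    infer_instance
  have hcoord_bound : ∀ i : Fin d, ∀ᵐ ω ∂μ, ‖h ω i‖ ≤ C := by
    intro i
    filter_upwards [hC] with ω hω
    exact le_trans (euclid_coord_le_norm (h ω) i) hω
  have hgi : ∀ i : Fin d, Integrable (fun ω => g ω i) μ := fun i =>
    (EuclideanSpace.proj i : EuclideanSpace ℝ (Fin d) →L[ℝ] ℝ).integrable_comp hg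
  have hhmeas : ∀ i : Fin d, AEStronglyMeasurable (fun ω => h ω i) μ :=
    fun i => ((EuclideanSpace.proj i : EuclideanSpace ℝ (Fin d) →L[ℝ] ℝ).continuous.comp_stronglyMeasurable
      (hh.mono hm)).aestronglyMeasurable
  have hint1 : ∀ i : Fin d, Integrable (fun ω => h ω i * g ω i) μ := fun i =>
    (hgi i).bdd_mul (hhmeas i) (hcoord_bound i)
  have hint2 : ∀ i : Fin d, Integrable (fun ω => h ω i * (μ[fun ω' => g ω' i|m]) ω) μ :=
    fun i => integrable_condExp.bdd_mul (hhmeas i) (hcoord_bound i)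
  have key : ∀ i : Fin d,
      ∫ ω, g ω i * h ω i ∂μ = ∫ ω, (μ[g|m]) ω i * h ω i ∂μ := by
    intro i
    have e1 : ∫ ω, h ω i * g ω i ∂μ = ∫ ω, (μ[fun ω' => h ω' i * g ω' i|m]) ω ∂μ :=
      (integral_condExp hm).symm
    have e2 : (μ[fun ω' => h ω' i * g ω' i|m])
        =ᵐ[μ] fun ω => h ω i * (μ[fun ω' => g ω' i|m]) ω :=
      condExp_stronglyMeasurable_mul_of_bound hm
        ((EuclideanSpace.proj i : EuclideanSpace ℝ (Fin d) →L[ℝ] ℝ).continuous.comp_stronglyMeasurable hh) (hgi i) C (hcoord_bound i)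
    have e3 : (fun ω => h ω i * (μ[fun ω' => g ω' i|m]) ω)
        =ᵐ[μ] fun ω => h ω i * (μ[g|m]) ω i := by
      filter_upwards [condexp_euclid_coord hm hg i] with ω hω
      rw [← hω]
    calc ∫ ω, g ω i * h ω i ∂μ = ∫ ω, h ω i * g ω i ∂μ := by
          simp_rw [mul_comm]
      _ = ∫ ω, (μ[fun ω' => h ω' i * g ω' i|m]) ω ∂μ := e1
      _ = ∫ ω, h ω i * (μ[g|m]) ω i ∂μ := integral_congr_ae (e2.trans e3)
      _ = ∫ ω, (μ[g|m]) ω i * h ω i ∂μ := by simp_rw [mul_comm]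
  have hint3 : ∀ i : Fin d, Integrable (fun ω => (μ[g|m]) ω i * h ω i) μ := by
    intro i
    have h2' : Integrable (fun ω => (μ[fun ω' => g ω' i|m]) ω * h ω i) μ :=
      (hint2 i).congr (Filter.Eventually.of_forall fun ω => mul_comm _ _)
    exact h2'.congr ((condexp_euclid_coord hm hg i).symm.mono
      (fun ω hω => by dsimp only; rw [hω]))
  calc ∫ ω, ⟪g ω, h ω⟫ ∂μ = ∫ ω, ∑ i, g ω i * h ω i ∂μ := by
        refine integral_congr_ae (Filter.Eventually.of_forall fun ω => ?_)
        simp [PiLp.inner_apply, RCLike.inner_apply, mul_comm]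
    _ = ∑ i, ∫ ω, g ω i * h ω i ∂μ := integral_finset_sum _ (fun i _ => hint1 i |>.congr
          (Filter.Eventually.of_forall fun ω => mul_comm _ _))
    _ = ∑ i, ∫ ω, (μ[g|m]) ω i * h ω i ∂μ := by exact Finset.sum_congr rfl fun i _ => key i
    _ = ∫ ω, ∑ i, (μ[g|m]) ω i * h ω i ∂μ := (integral_finset_sum _ fun i _ => hint3 i).symm
    _ = ∫ ω, ⟪(μ[g|m]) ω, h ω⟫ ∂μ := by
        refine integral_congr_ae (Filter.Eventually.of_forall fun ω => ?_)
        simp [PiLp.inner_apply, RCLike.inner_apply, mul_comm]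

variable [IsProbabilityMeasure μ]

lemma sgd_step_bound (hm : m ≤ mΩ)
    {f : EuclideanSpace ℝ (Fin d) → ℝ} (hf : Differentiable ℝ f)
    (hconv : ConvexOn ℝ Set.univ f)
    {B : ℝ} (hB : 0 ≤ B) (hgradB : ∀ y, ‖gradient f y‖ ≤ B)
    {γ Ek Vk : ℝ} (hγ : 0 < γ) (hEk : 0 ≤ Ek) (hVk : 0 ≤ Vk)
    {x x' z g : Ω → EuclideanSpace ℝ (Fin d)}
    (hx : StronglyMeasurable[m] x) (hz : StronglyMeasurable[m] z)
    (hgint : Integrable g μ)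
    (hrec : ∀ ω, x' ω = x ω - γ • g ω)
    {D : ℝ} (hD0 : 0 ≤ D)
    (hDx : ∀ ω, ‖x ω - z ω‖ ≤ D) (hDx' : ∀ ω, ‖x' ω - z ω‖ ≤ D)
    (hbias : ∀ᵐ ω ∂μ, ‖(μ[g|m]) ω - gradient f (x ω)‖ ≤ Real.sqrt d * Ek)
    (hvar : ∀ᵐ ω ∂μ, (μ[fun ω' => ‖g ω' - (μ[g|m]) ω'‖ ^ 2|m]) ω ≤ Vk) :
    2 * γ * ∫ ω, (f (x ω) - f (z ω)) ∂μ
      ≤ ((∫ ω, ‖x ω - z ω‖ ^ 2 ∂μ) - ∫ ω, ‖x' ω - z ω‖ ^ 2 ∂μ)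
        + 2 * Real.sqrt d * γ * D * Ek
        + γ ^ 2 * (B ^ 2 + 2 * Real.sqrt d * B * Ek + (d : ℝ) * Ek ^ 2 + Vk) := by
  haveI : SigmaFinite (μ.trim hm) := by
    have : IsFiniteMeasure (μ.trim hm) := isFiniteMeasure_trim hm
    infer_instance
  set G : Ω → EuclideanSpace ℝ (Fin d) := μ[g|m] with hG
  set h : Ω → EuclideanSpace ℝ (Fin d) := fun ω => x ω - z ω with hh
  have hsd : (0:ℝ) ≤ Real.sqrt d := Real.sqrt_nonneg _
  -- measurability
  have hhm : StronglyMeasurable[m] h := hx.sub hz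
  have hxms : AEStronglyMeasurable x μ := (hx.mono hm).aestronglyMeasurable
  have hzms : AEStronglyMeasurable z μ := (hz.mono hm).aestronglyMeasurable
  have hhms : AEStronglyMeasurable h μ := (hhm.mono hm).aestronglyMeasurable
  have hGm : StronglyMeasurable[m] G := stronglyMeasurable_condExp
  have hGms : AEStronglyMeasurable G μ := (hGm.mono hm).aestronglyMeasurable
  have hgms : AEStronglyMeasurable g μ := hgint.1
  have hgradmeas : Measurable (fun ω => gradient f (x ω)) := by
    have h1 : Measurable (fderiv ℝ f) := measurable_fderiv ℝ f
    have h2 : Measurable fun ω => fderiv ℝ f (x ω) :=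
      h1.comp (hx.mono hm).measurable
    exact ((InnerProductSpace.toDual ℝ
      (EuclideanSpace ℝ (Fin d))).symm.continuous.measurable).comp h2
  have hgradms : AEStronglyMeasurable (fun ω => gradient f (x ω)) μ :=
    hgradmeas.aestronglyMeasurable
  -- a.e. bound on G
  have hGbound : ∀ᵐ ω ∂μ, ‖G ω‖ ≤ B + Real.sqrt d * Ek := by
    filter_upwards [hbias] with ω hω
    have h1 : ‖G ω‖ - ‖gradient f (x ω)‖ ≤ ‖G ω - gradient f (x ω)‖ :=
      norm_sub_norm_le _ _
    have h2 := hgradB (x ω)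
    linarith
  -- pointwise algebraic identity
  have hiden : ∀ ω, ‖x' ω - z ω‖ ^ 2
      = ‖h ω‖ ^ 2 - 2 * γ * ⟪g ω, h ω⟫ + γ ^ 2 * ‖g ω‖ ^ 2 := by
    intro ω
    have e1 : x' ω - z ω = h ω - γ • g ω := by rw [hrec ω, hh]; dsimp only; rw [sub_right_comm]
    rw [e1, norm_sub_sq_real, real_inner_smul_right, norm_smul]
    rw [real_inner_comm]
    simp [abs_of_pos hγ, mul_pow]
    ring
  -- integrability
  have hr : Integrable (fun ω => ‖h ω‖ ^ 2) μ := by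
    refine Integrable.mono' (integrable_const (D ^ 2)) ?_ ?_
    · exact (hhms.norm.pow 2)
    · exact Filter.Eventually.of_forall fun ω => by
        rw [Real.norm_eq_abs, abs_of_nonneg (by positivity)]
        exact pow_le_pow_left₀ (norm_nonneg _) (hDx ω) 2
  have hr' : Integrable (fun ω => ‖x' ω - z ω‖ ^ 2) μ := by
    refine Integrable.mono' (integrable_const (D ^ 2)) ?_ ?_
    · have : AEStronglyMeasurable x' μ := by
        have : x' = fun ω => x ω - γ • g ω := funext hrec
        rw [this]
        exact hxms.sub (hgms.const_smul γ)
      exact ((this.sub hzms).norm.pow 2)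
    · exact Filter.Eventually.of_forall fun ω => by
        rw [Real.norm_eq_abs, abs_of_nonneg (by positivity)]
        exact pow_le_pow_left₀ (norm_nonneg _) (hDx' ω) 2
  have hinner : Integrable (fun ω => ⟪g ω, h ω⟫) μ := by
    refine Integrable.mono' (hgint.norm.mul_const D) (hgms.inner hhms) ?_
    exact Filter.Eventually.of_forall fun ω => by
      rw [Real.norm_eq_abs]
      exact (abs_real_inner_le_norm _ _).trans
        (mul_le_mul_of_nonneg_left (hDx ω) (norm_nonneg _))
  have hgsq : Integrable (fun ω => ‖g ω‖ ^ 2) μ := by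
    have heq : (fun ω => ‖g ω‖ ^ 2) = fun ω =>
        (‖x' ω - z ω‖ ^ 2 - ‖h ω‖ ^ 2 + 2 * γ * ⟪g ω, h ω⟫) / γ ^ 2 := by
      funext ω
      rw [hiden ω]
      field_simp
      ring
    rw [heq]
    exact ((hr'.sub hr).add (hinner.const_mul (2 * γ))).div_const (γ ^ 2)
  have hinnerG : Integrable (fun ω => ⟪g ω, G ω⟫) μ := by
    refine Integrable.mono' (hgint.norm.mul_const (B + Real.sqrt d * Ek))
      (hgms.inner hGms) ?_
    filter_upwards [hGbound] with ω hω
    rw [Real.norm_eq_abs]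
    exact (abs_real_inner_le_norm _ _).trans
      (mul_le_mul_of_nonneg_left hω (norm_nonneg _))
  have hGsq : Integrable (fun ω => ‖G ω‖ ^ 2) μ := by
    refine Integrable.mono' (integrable_const ((B + Real.sqrt d * Ek) ^ 2))
      (hGms.norm.pow 2) ?_
    filter_upwards [hGbound] with ω hω
    rw [Real.norm_eq_abs, abs_of_nonneg (by positivity)]
    exact pow_le_pow_left₀ (norm_nonneg _) hω 2
  have hdiffsq : Integrable (fun ω => ‖g ω - G ω‖ ^ 2) μ := by
    have heq : (fun ω => ‖g ω - G ω‖ ^ 2)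
        = fun ω => ‖g ω‖ ^ 2 - 2 * ⟪g ω, G ω⟫ + ‖G ω‖ ^ 2 := by
      funext ω; exact norm_sub_sq_real _ _
    rw [heq]
    exact (hgsq.sub (hinnerG.const_mul 2)).add hGsq
  have hφint : Integrable (fun ω => ⟪gradient f (x ω), h ω⟫) μ := by
    refine Integrable.mono' (integrable_const (B * D)) (hgradms.inner hhms) ?_
    exact Filter.Eventually.of_forall fun ω => by
      rw [Real.norm_eq_abs]
      exact (abs_real_inner_le_norm _ _).trans
        (mul_le_mul (hgradB _) (hDx ω) (norm_nonneg _) hB)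
  have hGinner : Integrable (fun ω => ⟪G ω, h ω⟫) μ := by
    refine Integrable.mono' (integrable_const ((B + Real.sqrt d * Ek) * D))
      (hGms.inner hhms) ?_
    filter_upwards [hGbound] with ω hω
    rw [Real.norm_eq_abs]
    exact (abs_real_inner_le_norm _ _).trans
      (mul_le_mul hω (hDx ω) (norm_nonneg _) (by positivity))
  have hfdiffint : Integrable (fun ω => f (x ω) - f (z ω)) μ := by
    refine Integrable.mono' (integrable_const (B * D))
      ((hf.continuous.comp_aestronglyMeasurable hxms).sub
        (hf.continuous.comp_aestronglyMeasurable hzms)) ?_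
    refine Filter.Eventually.of_forall fun ω => ?_
    rw [Real.norm_eq_abs, abs_le]
    constructor
    · have h1 := convex_grad_ineq hf hconv (z ω) (x ω)
      have h2 : ⟪gradient f (z ω), z ω - x ω⟫ ≤ B * D := by
        refine (real_inner_le_norm _ _).trans (mul_le_mul (hgradB _) ?_ (norm_nonneg _) hB)
        rw [← norm_neg]; simpa using hDx ω
      nlinarith [h1, h2]
    · have h1 := convex_grad_ineq hf hconv (x ω) (z ω)
      have h2 : ⟪gradient f (x ω), x ω - z ω⟫ ≤ B * D :=
        (real_inner_le_norm _ _).trans (mul_le_mul (hgradB _) (hDx ω) (norm_nonneg _) hB)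
      linarith
  -- Step F : expected gap ≤ ∫⟪∇f(x), h⟫
  have stepF : ∫ ω, (f (x ω) - f (z ω)) ∂μ ≤ ∫ ω, ⟪gradient f (x ω), h ω⟫ ∂μ := by
    refine integral_mono hfdiffint hφint fun ω => ?_
    exact convex_grad_ineq hf hconv (x ω) (z ω)
  -- Step E : ∫⟪∇f(x), h⟫ ≤ ∫⟪G, h⟫ + √d * Ek * D
  have stepE : ∫ ω, ⟪gradient f (x ω), h ω⟫ ∂μ
      ≤ (∫ ω, ⟪G ω, h ω⟫ ∂μ) + Real.sqrt d * Ek * D := by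
    have hsplit : ∫ ω, ⟪gradient f (x ω), h ω⟫ ∂μ - ∫ ω, ⟪G ω, h ω⟫ ∂μ
        = ∫ ω, ⟪gradient f (x ω) - G ω, h ω⟫ ∂μ := by
      rw [← integral_sub hφint hGinner]
      refine integral_congr_ae (Filter.Eventually.of_forall fun ω => ?_)
      simp [Pi.sub_apply, inner_sub_left]
    have hb : ∫ ω, ⟪gradient f (x ω) - G ω, h ω⟫ ∂μ ≤ Real.sqrt d * Ek * D := by
      have hint : Integrable (fun ω => ⟪gradient f (x ω) - G ω, h ω⟫) μ := by
        have := hφint.sub hGinner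
        refine this.congr (Filter.Eventually.of_forall fun ω => ?_)
        simp [Pi.sub_apply, inner_sub_left]
      calc ∫ ω, ⟪gradient f (x ω) - G ω, h ω⟫ ∂μ
          ≤ ∫ _ω, Real.sqrt d * Ek * D ∂μ := by
            refine integral_mono_ae hint (integrable_const _) ?_
            filter_upwards [hbias] with ω hω
            refine (real_inner_le_norm _ _).trans ?_
            have h1 : ‖gradient f (x ω) - G ω‖ ≤ Real.sqrt d * Ek := by
              rw [← norm_neg]; simpa using hω
            exact mul_le_mul h1 (hDx ω) (norm_nonneg _) (by positivity)
        _ = Real.sqrt d * Ek * D := by simp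
    linarith [hsplit ▸ hb]
  -- Step D : ∫⟪g, h⟫ = ∫⟪G, h⟫
  have stepD : ∫ ω, ⟪g ω, h ω⟫ ∂μ = ∫ ω, ⟪G ω, h ω⟫ ∂μ :=
    integral_inner_condexp hm hgint hhm (C := D) (Filter.Eventually.of_forall hDx)
  -- Step G : ∫ ‖g‖² ≤ B² + 2√d B Ek + d Ek² + Vk
  have stepG : ∫ ω, ‖g ω‖ ^ 2 ∂μ
      ≤ B ^ 2 + 2 * Real.sqrt d * B * Ek + (d : ℝ) * Ek ^ 2 + Vk := by
    have hzero : ∫ ω, ⟪g ω - G ω, G ω⟫ ∂μ = 0 := by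
      have h1 : ∫ ω, ⟪g ω, G ω⟫ ∂μ = ∫ ω, ⟪G ω, G ω⟫ ∂μ :=
        integral_inner_condexp hm hgint hGm (C := B + Real.sqrt d * Ek) hGbound
      have h2 : Integrable (fun ω => ⟪G ω, G ω⟫) μ :=
        hGsq.congr (Filter.Eventually.of_forall fun ω =>
          (real_inner_self_eq_norm_sq (G ω)).symm)
      have h3 : ∫ ω, ⟪g ω - G ω, G ω⟫ ∂μ
          = (∫ ω, ⟪g ω, G ω⟫ ∂μ) - ∫ ω, ⟪G ω, G ω⟫ ∂μ := by
        rw [← integral_sub hinnerG h2]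
        exact integral_congr_ae (Filter.Eventually.of_forall fun ω => by
          simp [Pi.sub_apply, inner_sub_left])
      rw [h3, h1, sub_self]
    have hvar' : ∫ ω, ‖g ω - G ω‖ ^ 2 ∂μ ≤ Vk := by
      have h1 : ∫ ω, ‖g ω - G ω‖ ^ 2 ∂μ
          = ∫ ω, (μ[fun ω' => ‖g ω' - G ω'‖ ^ 2|m]) ω ∂μ := (integral_condExp hm).symm
      rw [h1]
      calc ∫ ω, (μ[fun ω' => ‖g ω' - G ω'‖ ^ 2|m]) ω ∂μ
          ≤ ∫ _ω, Vk ∂μ := integral_mono_ae integrable_condExp (integrable_const _) hvar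
        _ = Vk := by simp
    have hGsqb : ∫ ω, ‖G ω‖ ^ 2 ∂μ ≤ (B + Real.sqrt d * Ek) ^ 2 := by
      calc ∫ ω, ‖G ω‖ ^ 2 ∂μ ≤ ∫ _ω, (B + Real.sqrt d * Ek) ^ 2 ∂μ := by
            refine integral_mono_ae hGsq (integrable_const _) ?_
            filter_upwards [hGbound] with ω hω
            exact pow_le_pow_left₀ (norm_nonneg _) hω 2
        _ = (B + Real.sqrt d * Ek) ^ 2 := by simp
    have hdecomp : ∫ ω, ‖g ω‖ ^ 2 ∂μ
        = (∫ ω, ‖g ω - G ω‖ ^ 2 ∂μ) + 2 * (∫ ω, ⟪g ω - G ω, G ω⟫ ∂μ)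
          + ∫ ω, ‖G ω‖ ^ 2 ∂μ := by
      have hptw : ∀ ω, ‖g ω‖ ^ 2
          = ‖g ω - G ω‖ ^ 2 + 2 * ⟪g ω - G ω, G ω⟫ + ‖G ω‖ ^ 2 := by
        intro ω
        have := norm_add_sq_real (g ω - G ω) (G ω)
        simpa using this
      have hintcross : Integrable (fun ω => ⟪g ω - G ω, G ω⟫) μ := by
        refine (hinnerG.sub (hGsq.congr (Filter.Eventually.of_forall fun ω =>
          (real_inner_self_eq_norm_sq (G ω)).symm))).congr
          (Filter.Eventually.of_forall fun ω => ?_)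
        simp [Pi.sub_apply, inner_sub_left]
      calc ∫ ω, ‖g ω‖ ^ 2 ∂μ
          = ∫ ω, (‖g ω - G ω‖ ^ 2 + 2 * ⟪g ω - G ω, G ω⟫ + ‖G ω‖ ^ 2) ∂μ :=
            integral_congr_ae (Filter.Eventually.of_forall hptw)
        _ = (∫ ω, (‖g ω - G ω‖ ^ 2 + 2 * ⟪g ω - G ω, G ω⟫) ∂μ)
              + ∫ ω, ‖G ω‖ ^ 2 ∂μ :=
            integral_add (hdiffsq.add (hintcross.const_mul 2)) hGsq
        _ = (∫ ω, ‖g ω - G ω‖ ^ 2 ∂μ) + (∫ ω, 2 * ⟪g ω - G ω, G ω⟫ ∂μ)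
              + ∫ ω, ‖G ω‖ ^ 2 ∂μ := by
            rw [integral_add hdiffsq (hintcross.const_mul 2)]
        _ = (∫ ω, ‖g ω - G ω‖ ^ 2 ∂μ) + 2 * (∫ ω, ⟪g ω - G ω, G ω⟫ ∂μ)
              + ∫ ω, ‖G ω‖ ^ 2 ∂μ := by
            rw [integral_const_mul]
    have hsq : (B + Real.sqrt d * Ek) ^ 2
        = B ^ 2 + 2 * Real.sqrt d * B * Ek + (d : ℝ) * Ek ^ 2 := by
      have hsd2 : Real.sqrt d ^ 2 = (d : ℝ) := Real.sq_sqrt (Nat.cast_nonneg d)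
      calc (B + Real.sqrt d * Ek) ^ 2
          = B ^ 2 + 2 * Real.sqrt d * B * Ek + Real.sqrt d ^ 2 * Ek ^ 2 := by ring
        _ = B ^ 2 + 2 * Real.sqrt d * B * Ek + (d : ℝ) * Ek ^ 2 := by rw [hsd2]
    rw [hdecomp, hzero]
    linarith [hvar', hGsqb, hsq ▸ hGsqb]
  -- Step A integrated : 2γ ∫⟪g,h⟫ = ∫r - ∫r' + γ² ∫‖g‖²
  have stepA : 2 * γ * ∫ ω, ⟪g ω, h ω⟫ ∂μ
      = (∫ ω, ‖h ω‖ ^ 2 ∂μ) - (∫ ω, ‖x' ω - z ω‖ ^ 2 ∂μ)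
        + γ ^ 2 * ∫ ω, ‖g ω‖ ^ 2 ∂μ := by
    have h1 : ∫ ω, ‖x' ω - z ω‖ ^ 2 ∂μ
        = (∫ ω, ‖h ω‖ ^ 2 ∂μ) - 2 * γ * (∫ ω, ⟪g ω, h ω⟫ ∂μ)
          + γ ^ 2 * ∫ ω, ‖g ω‖ ^ 2 ∂μ := by
      calc ∫ ω, ‖x' ω - z ω‖ ^ 2 ∂μ
          = ∫ ω, (‖h ω‖ ^ 2 - 2 * γ * ⟪g ω, h ω⟫ + γ ^ 2 * ‖g ω‖ ^ 2) ∂μ :=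
            integral_congr_ae (Filter.Eventually.of_forall fun ω => hiden ω)
        _ = (∫ ω, (‖h ω‖ ^ 2 - 2 * γ * ⟪g ω, h ω⟫) ∂μ)
              + ∫ ω, γ ^ 2 * ‖g ω‖ ^ 2 ∂μ :=
            integral_add (hr.sub (hinner.const_mul (2 * γ))) (hgsq.const_mul (γ ^ 2))
        _ = (∫ ω, ‖h ω‖ ^ 2 ∂μ) - (∫ ω, 2 * γ * ⟪g ω, h ω⟫ ∂μ)
              + ∫ ω, γ ^ 2 * ‖g ω‖ ^ 2 ∂μ := by
            rw [integral_sub hr (hinner.const_mul (2 * γ))]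
        _ = (∫ ω, ‖h ω‖ ^ 2 ∂μ) - 2 * γ * (∫ ω, ⟪g ω, h ω⟫ ∂μ)
              + γ ^ 2 * ∫ ω, ‖g ω‖ ^ 2 ∂μ := by
            rw [integral_const_mul, integral_const_mul]
    linarith
  -- assemble
  have final := calc
    2 * γ * ∫ ω, (f (x ω) - f (z ω)) ∂μ
        ≤ 2 * γ * ∫ ω, ⟪gradient f (x ω), h ω⟫ ∂μ :=
          mul_le_mul_of_nonneg_left stepF (by positivity)
    _ ≤ 2 * γ * ((∫ ω, ⟪G ω, h ω⟫ ∂μ) + Real.sqrt d * Ek * D) :=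
          mul_le_mul_of_nonneg_left stepE (by positivity)
    _ = 2 * γ * (∫ ω, ⟪g ω, h ω⟫ ∂μ) + 2 * Real.sqrt d * γ * D * Ek := by
          rw [stepD]; ring
    _ = (∫ ω, ‖h ω‖ ^ 2 ∂μ) - (∫ ω, ‖x' ω - z ω‖ ^ 2 ∂μ)
          + γ ^ 2 * (∫ ω, ‖g ω‖ ^ 2 ∂μ) + 2 * Real.sqrt d * γ * D * Ek := by
          rw [stepA]
    _ ≤ (∫ ω, ‖h ω‖ ^ 2 ∂μ) - (∫ ω, ‖x' ω - z ω‖ ^ 2 ∂μ)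
          + γ ^ 2 * (B ^ 2 + 2 * Real.sqrt d * B * Ek + (d : ℝ) * Ek ^ 2 + Vk)
          + 2 * Real.sqrt d * γ * D * Ek := by
          have := mul_le_mul_of_nonneg_left stepG (sq_nonneg γ)
          linarith
  linarith [final]

end

noncomputable section

/-- **SGD-BGO under oracle (O1): key inequality over a window of iterations**
(Lemma 1 in the paper). For indices `1 < k₀ < k₁ ≤ N`, assuming the distances
`‖x_k - x_{k₀}‖` are bounded by `D`, the weighted sum of expected suboptimality
gaps relative to `x_{k₀}` is bounded. -/
theorem sgd_bgo_O1_window_lemma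
    {d : ℕ} {Ω : Type*} {mΩ : MeasurableSpace Ω}
    (μ : Measure Ω) [IsProbabilityMeasure μ]
    (ℱ : Filtration ℕ mΩ)
    (f : EuclideanSpace ℝ (Fin d) → ℝ)
    (hf : Differentiable ℝ f)
    (hconv : ConvexOn ℝ Set.univ f)
    (B c₁ c₂ c₃ : ℝ)
    (hB : 0 < B)
    (hc₁ : 0 < c₁) (hc₂ : 0 < c₂) (hc₃ : 0 < c₃)
    -- (A2): `‖∇f(x)‖₁ ≤ B`
    (hgradB : ∀ x, ∑ i, |gradient f x i| ≤ B)
    (N : ℕ)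
    -- algorithm parameters: positive step sizes, perturbation constants and
    -- batch sizes
    (γ η m : ℕ → ℝ)
    (hγpos : ∀ k, 1 ≤ k → 0 < γ k)
    (hηpos : ∀ k, 1 ≤ k → 0 < η k)
    (hmpos : ∀ k, 1 ≤ k → 0 < m k)
    -- iterates and oracle outputs
    (x g : ℕ → Ω → EuclideanSpace ℝ (Fin d))
    (hx_adapted : ∀ k, StronglyMeasurable[ℱ k] (x k))
    (hg_int : ∀ k, Integrable (g k) μ)
    (hrec : ∀ k, 1 ≤ k → k ≤ N → ∀ ω, x (k + 1) ω = x k ω - γ k • g k ω)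
    -- oracle (O1), condition (a): bias bound in the sup-norm
    (hbias : ∀ k, 1 ≤ k → k ≤ N →
      ∀ᵐ ω ∂μ, ∀ i, |(μ[g k|ℱ k]) ω i - gradient f (x k ω) i|
        ≤ c₁ * η k ^ 2 + c₃ / (η k * Real.sqrt (m k)))
    -- oracle (O1), condition (b): conditional variance bound
    (hvar : ∀ k, 1 ≤ k → k ≤ N →
      ∀ᵐ ω ∂μ,
        (μ[fun ω' => ‖g k ω' - (μ[g k|ℱ k]) ω'‖ ^ 2|ℱ k]) ω ≤ c₂ / η k ^ 2)
    -- indices of the window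
    (k₀ k₁ : ℕ) (hk₀ : 1 < k₀) (hk₀k₁ : k₀ < k₁) (hk₁ : k₁ ≤ N)
    -- `D` bounds the distances of the iterates to `x_{k₀}`
    (D : ℝ)
    (hD : ∀ k, ∀ ω, ‖x k ω - x k₀ ω‖ ≤ D)
    (E B2 : ℕ → ℝ)
    (hE : ∀ k, E k = c₁ * η k ^ 2 + c₃ / (η k * Real.sqrt (m k)))
    (hB2 : ∀ k, B2 k = B ^ 2 + 2 * Real.sqrt d * B * E k + d * E k ^ 2
        + c₂ / η k ^ 2) :
    ∑ k ∈ Finset.Icc k₀ k₁,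
        2 * γ k * ∫ ω, (f (x k ω) - f (x k₀ ω)) ∂μ
      ≤ ∑ k ∈ Finset.Icc k₀ k₁,
          (2 * Real.sqrt d * γ k * D * E k + γ k ^ 2 * B2 k) := by
  have hΩ : Nonempty Ω := by
    by_contra hne
    have h0 : μ Set.univ = 0 := by
      rw [Set.univ_eq_empty_iff.mpr (not_nonempty_iff.mp hne)]; simp
    rw [measure_univ] at h0
    exact one_ne_zero h0
  obtain ⟨ω₀⟩ := hΩ
  have hD0 : 0 ≤ D := le_trans (norm_nonneg _) (hD k₀ ω₀)
  have hgradB' : ∀ y, ‖gradient f y‖ ≤ B := fun y =>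
    (euclid_norm_le_sum_abs (gradient f y)).trans (hgradB y)
  set a : ℕ → ℝ := fun j => ∫ ω, ‖x j ω - x k₀ ω‖ ^ 2 ∂μ with ha
  have hanonneg : ∀ j, 0 ≤ a j := fun j =>
    integral_nonneg fun ω => by positivity
  have hak₀ : a k₀ = 0 := by
    simp only [ha, sub_self]
    simp
  have hperk : ∀ k ∈ Finset.Icc k₀ k₁,
      2 * γ k * ∫ ω, (f (x k ω) - f (x k₀ ω)) ∂μ
        ≤ (a k - a (k + 1))
          + (2 * Real.sqrt d * γ k * D * E k + γ k ^ 2 * B2 k) := by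
    intro k hk
    rw [Finset.mem_Icc] at hk
    have hk1 : 1 ≤ k := le_trans (le_of_lt hk₀) hk.1
    have hkN : k ≤ N := le_trans hk.2 hk₁
    have hγk := hγpos k hk1
    have hηk := hηpos k hk1
    have hmk := hmpos k hk1
    have hEk : 0 ≤ E k := by
      rw [hE k]
      have h1 : 0 < Real.sqrt (m k) := Real.sqrt_pos.mpr hmk
      positivity
    have hVk : 0 ≤ c₂ / η k ^ 2 := by positivity
    have hbias' : ∀ᵐ ω ∂μ, ‖(μ[g k|ℱ k]) ω - gradient f (x k ω)‖
        ≤ Real.sqrt d * E k := by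
      filter_upwards [hbias k hk1 hkN] with ω hω
      refine euclid_norm_le_sqrt_card _ hEk fun i => ?_
      have := hω i
      rw [hE k]
      simpa using this
    have hstep := sgd_step_bound (μ := μ) (ℱ.le k) hf hconv (le_of_lt hB)
      hgradB' hγk hEk hVk (hx_adapted k)
      ((hx_adapted k₀).mono (ℱ.mono hk.1))
      (hg_int k) (hrec k hk1 hkN) hD0 (hD k) (hD (k + 1))
      hbias' (hvar k hk1 hkN)
    have hB2k : B ^ 2 + 2 * Real.sqrt d * B * E k + (d : ℝ) * E k ^ 2
        + c₂ / η k ^ 2 = B2 k := (hB2 k).symm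
    rw [hB2k] at hstep
    have haa : a k = ∫ ω, ‖x k ω - x k₀ ω‖ ^ 2 ∂μ := rfl
    have haa' : a (k + 1) = ∫ ω, ‖x (k + 1) ω - x k₀ ω‖ ^ 2 ∂μ := rfl
    rw [haa, haa']
    linarith
  have hsum := Finset.sum_le_sum hperk
  rw [Finset.sum_add_distrib] at hsum
  have htel : ∑ k ∈ Finset.Icc k₀ k₁, (a k - a (k + 1)) = a k₀ - a (k₁ + 1) := by
    have h1 : Finset.Icc k₀ k₁ = Finset.Ico k₀ (k₁ + 1) := by
      rw [Finset.Ico_add_one_right_eq_Icc]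
    rw [h1, Finset.sum_Ico_eq_sum_range]
    have h2 : ∑ i ∈ Finset.range (k₁ + 1 - k₀),
        (a (k₀ + i) - a (k₀ + i + 1))
        = a (k₀ + 0) - a (k₀ + (k₁ + 1 - k₀)) := by
      exact Finset.sum_range_sub' (fun i => a (k₀ + i)) (k₁ + 1 - k₀)
    rw [h2, Nat.add_zero, show k₀ + (k₁ + 1 - k₀) = k₁ + 1 from by omega]
  rw [htel, hak₀] at hsum
  have := hanonneg (k₁ + 1)
  linarith
end
end

section
/- Let f : ℝ^d → ℝ be three times continuously differentiable with all third-order partial derivatives bounded in absolute value by M > 0, let Δ be a d-dimensional standard Gaussian random vector, and let η > 0. Then the Gaussian-smoothing two-point gradient estimate satisfies ‖E[ Δ · (f(x + ηΔ) − f(x − ηΔ)) / (2η) ] − ∇f(x)‖_∞ ≤ C η² for every x ∈ ℝ^d, where C is a constant depending only on M and d (one may take C = (M/6)·E[‖Δ‖₁³ ‖Δ‖_∞]). -/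
open MeasureTheory ProbabilityTheory Real
open scoped BigOperators

open Set
open scoped NNReal ENNReal

noncomputable section

section AuxLemmas

variable {E : Type*} [NormedAddCommGroup E] [NormedSpace ℝ E] {d : ℕ}

lemma helper_one_side {F G : ℝ → ℝ} {c η : ℝ} (k : ℕ) (hη : 0 ≤ η)
    (hF : ∀ t, HasDerivAt F (G t) t) (hF0 : F 0 = 0)
    (hG : ∀ t, 0 ≤ t → G t ≤ c * t ^ k) :
    F η ≤ c * η ^ (k + 1) / (k + 1) := by
  set u : ℝ → ℝ := fun t => c * t ^ (k+1) / (k+1) - F t with hu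
  have hpow : ∀ t : ℝ, HasDerivAt (fun s => c * s ^ (k+1) / (k+1)) (c * t ^ k) t := by
    intro t
    have h := ((hasDerivAt_pow (k+1) t).const_mul c).div_const ((k:ℝ)+1)
    refine h.congr_deriv ?_
    have : ((k:ℝ)+1) ≠ 0 := by positivity
    rw [Nat.add_sub_cancel]; push_cast
    field_simp
  have hu' : ∀ t : ℝ, HasDerivAt u (c * t ^ k - G t) t := fun t => (hpow t).sub (hF t)
  have hFc : Continuous F := by
    have : Differentiable ℝ F := fun t => (hF t).differentiableAt
    exact this.continuous
  have hmono : MonotoneOn u (Icc 0 η) := by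
    apply monotoneOn_of_deriv_nonneg (convex_Icc 0 η)
    · exact (Continuous.sub (by fun_prop) hFc).continuousOn
    · exact fun t _ => ((hu' t).differentiableAt).differentiableWithinAt
    · intro t ht
      rw [interior_Icc] at ht
      rw [(hu' t).deriv]
      have := hG t ht.1.le
      linarith
  have := hmono (left_mem_Icc.mpr hη) (right_mem_Icc.mpr hη) hη
  simp only [hu, hF0, sub_zero, zero_pow (Nat.succ_ne_zero k), mul_zero, zero_div] at this
  linarith

lemma helper_mono {F G : ℝ → ℝ} {c η : ℝ} (k : ℕ) (hη : 0 ≤ η)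
    (hF : ∀ t, HasDerivAt F (G t) t) (hF0 : F 0 = 0)
    (hG : ∀ t, 0 ≤ t → |G t| ≤ c * t ^ k) :
    |F η| ≤ c * η ^ (k + 1) / (k + 1) := by
  rw [abs_le]
  constructor
  · have := helper_one_side (F := fun t => -F t) (G := fun t => -G t) (c := c) k hη
      (fun t => (hF t).neg) (by simp [hF0])
      (fun t ht => by have h2 := (abs_le.mp (hG t ht)).1; show -G t ≤ c * t ^ k; linarith)
    simp only [neg_le] at this ⊢
    linarith
  · exact helper_one_side k hη hF hF0 (fun t ht => (le_of_abs_le (hG t ht)))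

-- two-point third order Taylor bound
lemma taylor_two_point {φ : ℝ → ℝ} (hφ : ContDiff ℝ 3 φ) {K η : ℝ} (hη : 0 ≤ η)
    (hK : ∀ t, |deriv (deriv (deriv φ)) t| ≤ K) :
    |φ η - φ (-η) - 2 * η * deriv φ 0| ≤ K * η ^ 3 / 3 := by
  have hK0 : 0 ≤ K := le_trans (abs_nonneg _) (hK 0)
  have hφ3 : ContDiff ℝ ((3 : ℕ) : WithTop ℕ∞) φ := by exact_mod_cast hφ
  have hd1 : Differentiable ℝ φ := hφ.differentiable (by norm_num)
  have hc2 : ContDiff ℝ 2 (deriv φ) := by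
    have := ContDiff.iterate_deriv' 2 1 (show ContDiff ℝ ((2+1 : ℕ) : WithTop ℕ∞) φ from hφ3)
    simpa using this
  have hc1 : ContDiff ℝ 1 (deriv (deriv φ)) := by
    have := ContDiff.iterate_deriv' 1 2 (show ContDiff ℝ ((1+2 : ℕ) : WithTop ℕ∞) φ from hφ3)
    simpa [Function.iterate_succ, Function.comp] using this
  have hd2 : Differentiable ℝ (deriv φ) := hc2.differentiable (by norm_num)
  have hd3 : Differentiable ℝ (deriv (deriv φ)) := hc1.differentiable (by norm_num)
  set g : ℝ → ℝ := fun t => deriv φ t + deriv φ (-t) - 2 * deriv φ 0 with hgdef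
  have hgd : ∀ t, HasDerivAt g (deriv (deriv φ) t - deriv (deriv φ) (-t)) t := by
    intro t
    have h1 : HasDerivAt (fun t : ℝ => deriv φ (-t)) (-(deriv (deriv φ) (-t))) t := by
      simpa [Function.comp_def] using (HasDerivAt.scomp t ((hd2 (-t)).hasDerivAt) (hasDerivAt_neg t))
    have := (((hd2 t).hasDerivAt).add h1).sub_const (2 * deriv φ 0)
    refine this.congr_deriv ?_
    try ring
  have hgbound : ∀ t, 0 ≤ t → |deriv (deriv φ) t - deriv (deriv φ) (-t)| ≤ (2*K) * t ^ 1 := by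
    intro t ht
    have hb : ∀ x ∈ (univ : Set ℝ), ‖deriv (deriv (deriv φ)) x‖ ≤ K := fun x _ => hK x
    have := Convex.norm_image_sub_le_of_norm_deriv_le
      (fun x _ => (hd3 x)) hb (convex_univ) (Set.mem_univ (-t)) (Set.mem_univ t)
    rw [Real.norm_eq_abs, Real.norm_eq_abs] at this
    have habs : |t - -t| = 2 * t := by rw [abs_of_nonneg] <;> linarith
    rw [habs] at this
    calc |deriv (deriv φ) t - deriv (deriv φ) (-t)| ≤ K * (2 * t) := this
    _ = (2*K) * t ^ 1 := by ring
  have hg0 : g 0 = 0 := by simp [hgdef]; ring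
  have hgle : ∀ t, 0 ≤ t → |g t| ≤ K * t ^ 2 := by
    intro t ht
    have h := helper_mono 1 ht hgd hg0 hgbound
    have : (2*K) * t ^ (1+1) / ((1:ℕ)+1 : ℝ) = K * t ^ 2 := by norm_num; ring
    calc |g t| ≤ (2*K) * t ^ (1+1) / ((1:ℕ)+1 : ℝ) := by exact_mod_cast h
    _ = K * t ^ 2 := this
  set r : ℝ → ℝ := fun t => φ t - φ (-t) - 2 * t * deriv φ 0 with hrdef
  have hrd : ∀ t, HasDerivAt r (g t) t := by
    intro t
    have h1 : HasDerivAt (fun t : ℝ => φ (-t)) (-(deriv φ (-t))) t := by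
      simpa [Function.comp_def] using (HasDerivAt.scomp t ((hd1 (-t)).hasDerivAt) (hasDerivAt_neg t))
    have h2 : HasDerivAt (fun t : ℝ => 2 * t * deriv φ 0) (2 * deriv φ 0) t := by
      simpa using ((hasDerivAt_id t).const_mul 2).mul_const (deriv φ 0)
    have := (((hd1 t).hasDerivAt).sub h1).sub h2
    refine this.congr_deriv ?_
    try simp [hgdef]
    try ring
  have hr0 : r 0 = 0 := by simp [hrdef]
  have h := helper_mono 2 hη hrd hr0 hgle
  have heq : K * η ^ (2+1) / ((2:ℕ)+1 : ℝ) = K * η ^ 3 / 3 := by norm_num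
  calc |φ η - φ (-η) - 2 * η * deriv φ 0| = |r η| := by rw [hrdef]
  _ ≤ K * η ^ (2+1) / ((2:ℕ)+1 : ℝ) := by exact_mod_cast h
  _ = K * η ^ 3 / 3 := heq

lemma itfd_shift (f : E → ℝ) (hf : ContDiff ℝ 3 f) (x : E) :
    ∀ {n : ℕ}, n ≤ 3 → ∀ z : E,
      iteratedFDeriv ℝ n (fun y => f (x + y)) z = iteratedFDeriv ℝ n f (x + z) := by
  intro n
  induction n with
  | zero => intro _ z; ext m; simp [iteratedFDeriv_zero_apply]
  | succ n ih =>
    intro hn z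
    have hn' : n ≤ 3 := Nat.le_of_succ_le hn
    have hdn : Differentiable ℝ (iteratedFDeriv ℝ n f) := by
      apply hf.differentiable_iteratedFDeriv
      exact_mod_cast Nat.lt_of_succ_le hn
    ext m
    rw [iteratedFDeriv_succ_apply_left, iteratedFDeriv_succ_apply_left]
    have h1 : iteratedFDeriv ℝ n (fun y => f (x + y)) = fun w => iteratedFDeriv ℝ n f (x + w) :=
      funext (ih hn')
    rw [h1]
    have h2 : HasFDerivAt (fun w => iteratedFDeriv ℝ n f (x + w))
        (fderiv ℝ (iteratedFDeriv ℝ n f) (x + z)) z := by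
      have hinner : HasFDerivAt (fun w : E => x + w) (ContinuousLinearMap.id ℝ E) z := by
        simpa using (hasFDerivAt_id z).const_add x
      have := ((hdn (x + z)).hasFDerivAt).comp z hinner
      simpa [Function.comp_def] using this
    rw [h2.fderiv]


lemma eucl_repr (v : EuclideanSpace ℝ (Fin d)) :
    v = ∑ j, v j • EuclideanSpace.single j (1:ℝ) := by
  ext k
  rw [show (∑ j, v j • EuclideanSpace.single j (1:ℝ)) k
      = ∑ j, (v j • EuclideanSpace.single j (1:ℝ)) k from by
    simp only [WithLp.ofLp_sum, Finset.sum_apply]]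
  simp [EuclideanSpace.single_apply]

lemma bound_line (f : EuclideanSpace ℝ (Fin d) → ℝ) (M : ℝ)
    (hM3 : ∀ x : EuclideanSpace ℝ (Fin d), ∀ i j k : Fin d,
      |iteratedFDeriv ℝ 3 f x
        ![EuclideanSpace.single i 1, EuclideanSpace.single j 1,
          EuclideanSpace.single k 1]| ≤ M)
    (y v : EuclideanSpace ℝ (Fin d)) :
    |iteratedFDeriv ℝ 3 f y (fun _ => v)| ≤ M * (∑ i, |v i|) ^ 3 := by
  set B := iteratedFDeriv ℝ 3 f y with hB
  have hm : (fun _ : Fin 3 => v)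
      = fun k : Fin 3 => ∑ j : Fin d, v j • EuclideanSpace.single j (1:ℝ) := by
    funext k; exact eucl_repr v
  have hsum : B (fun _ => v)
      = ∑ r : Fin 3 → Fin d, (∏ k, v (r k)) • B (fun k => EuclideanSpace.single (r k) (1:ℝ)) := by
    rw [hm, B.map_sum]
    exact Finset.sum_congr rfl fun r _ =>
      B.map_smul_univ (fun k => v (r k)) (fun k => EuclideanSpace.single (r k) (1:ℝ))
  rw [hsum]
  have hterm : ∀ r : Fin 3 → Fin d,
      |(∏ k, v (r k)) • B (fun k => EuclideanSpace.single (r k) (1:ℝ))|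
        ≤ (∏ k, |v (r k)|) * M := by
    intro r
    have hBr : |B (fun k => EuclideanSpace.single (r k) (1:ℝ))| ≤ M := by
      have h := hM3 y (r 0) (r 1) (r 2)
      have : (fun k : Fin 3 => EuclideanSpace.single (r k) (1:ℝ))
          = ![EuclideanSpace.single (r 0) 1, EuclideanSpace.single (r 1) 1,
              EuclideanSpace.single (r 2) 1] := by
        funext k; fin_cases k <;> rfl
      rw [this]; exact h
    rw [smul_eq_mul, abs_mul, Finset.abs_prod]
    exact mul_le_mul_of_nonneg_left hBr (Finset.prod_nonneg fun _ _ => abs_nonneg _)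
  calc |∑ r : Fin 3 → Fin d, (∏ k, v (r k)) • B (fun k => EuclideanSpace.single (r k) (1:ℝ))|
      ≤ ∑ r : Fin 3 → Fin d, |(∏ k, v (r k)) • B (fun k => EuclideanSpace.single (r k) (1:ℝ))| :=
        Finset.abs_sum_le_sum_abs _ _
    _ ≤ ∑ r : Fin 3 → Fin d, (∏ k, |v (r k)|) * M :=
        Finset.sum_le_sum fun r _ => hterm r
    _ = (∑ r : Fin 3 → Fin d, ∏ k, |v (r k)|) * M := by rw [← Finset.sum_mul]
    _ = M * (∑ i, |v i|) ^ 3 := by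
        have h3 : (∑ i, |v i|) ^ 3 = ∑ r : Fin 3 → Fin d, ∏ k, |v (r k)| := by
          have hc : (∑ i, |v i|) ^ 3 = ∏ _k : Fin 3, (∑ i, |v i|) := by
            simp [Finset.prod_const]
          rw [hc, Finset.prod_univ_sum]
          rw [← Fintype.piFinset_univ]
        rw [h3, mul_comm]

lemma line_contDiff (f : EuclideanSpace ℝ (Fin d) → ℝ) (hf : ContDiff ℝ 3 f)
    (x v : EuclideanSpace ℝ (Fin d)) :
    ContDiff ℝ 3 (fun t : ℝ => f (x + t • v)) :=
  hf.comp (by fun_prop)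

lemma line_third_deriv_bound (f : EuclideanSpace ℝ (Fin d) → ℝ) (hf : ContDiff ℝ 3 f) (M : ℝ)
    (hM3 : ∀ x : EuclideanSpace ℝ (Fin d), ∀ i j k : Fin d,
      |iteratedFDeriv ℝ 3 f x
        ![EuclideanSpace.single i 1, EuclideanSpace.single j 1,
          EuclideanSpace.single k 1]| ≤ M)
    (x v : EuclideanSpace ℝ (Fin d)) (t : ℝ) :
    |deriv (deriv (deriv (fun t : ℝ => f (x + t • v)))) t| ≤ M * (∑ i, |v i|) ^ 3 := by
  set Lv : ℝ →L[ℝ] EuclideanSpace ℝ (Fin d) := (ContinuousLinearMap.id ℝ ℝ).smulRight v with hLv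
  have hF : ContDiff ℝ 3 (fun y : EuclideanSpace ℝ (Fin d) => f (x + y)) := hf.comp (by fun_prop)
  have hφF : (fun t : ℝ => f (x + t • v)) = (fun y : EuclideanSpace ℝ (Fin d) => f (x + y)) ∘ Lv := by
    funext s; simp [hLv, Function.comp]
  have h1 : deriv (deriv (deriv (fun t : ℝ => f (x + t • v)))) t
      = iteratedDeriv 3 (fun t : ℝ => f (x + t • v)) t := by
    rw [show (3:ℕ) = 2+1 from rfl, iteratedDeriv_succ,
        show (2:ℕ) = 1+1 from rfl, iteratedDeriv_succ, iteratedDeriv_one]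
  rw [h1, hφF, iteratedDeriv_eq_iteratedFDeriv]
  rw [Lv.iteratedFDeriv_comp_right hF t (by exact_mod_cast le_refl (3:ℕ))]
  rw [ContinuousMultilinearMap.compContinuousLinearMap_apply]
  have hLv1 : ∀ i : Fin 3, Lv ((fun _ => (1:ℝ)) i) = v := by intro i; simp [hLv]
  have : (fun i : Fin 3 => Lv ((fun _ => (1:ℝ)) i)) = fun _ : Fin 3 => v := funext hLv1
  rw [this, itfd_shift f hf x (le_refl 3) (Lv t)]
  exact bound_line f M hM3 _ v

lemma key_estimate (f : EuclideanSpace ℝ (Fin d) → ℝ) (hf : ContDiff ℝ 3 f) (M : ℝ)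
    (hM3 : ∀ x : EuclideanSpace ℝ (Fin d), ∀ i j k : Fin d,
      |iteratedFDeriv ℝ 3 f x
        ![EuclideanSpace.single i 1, EuclideanSpace.single j 1,
          EuclideanSpace.single k 1]| ≤ M)
    (x v : EuclideanSpace ℝ (Fin d)) {η : ℝ} (hη : 0 ≤ η) :
    |f (x + η • v) - f (x - η • v) - 2 * η * (fderiv ℝ f x v)|
      ≤ M * (∑ i, |v i|) ^ 3 * η ^ 3 / 3 := by
  set φ := fun t : ℝ => f (x + t • v) with hφdef
  have hφ : ContDiff ℝ 3 φ := line_contDiff f hf x v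
  have hder : deriv φ 0 = fderiv ℝ f x v := by
    have hg : HasDerivAt (fun t : ℝ => x + t • v) v 0 := by
      simpa using ((hasDerivAt_id (0:ℝ)).smul_const v).const_add x
    have hfd : HasFDerivAt f (fderiv ℝ f x) (x + (0:ℝ) • v) := by
      simpa using (hf.differentiable (by norm_num) x).hasFDerivAt
    have := hfd.comp_hasDerivAt 0 hg
    exact this.deriv
  have hK := fun t => line_third_deriv_bound f hf M hM3 x v t
  have h := taylor_two_point hφ hη hK
  rw [hder] at h
  have e1 : φ η = f (x + η • v) := rfl
  have e2 : φ (-η) = f (x - η • v) := by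
    simp only [hφdef, neg_smul, ← sub_eq_add_neg]
  rw [e1, e2] at h
  exact h

lemma gaussian_pdf_eq (x : ℝ) :
    gaussianPDFReal 0 1 x = (√(2 * π))⁻¹ * rexp (-(1/2) * x ^ 2) := by
  simp only [gaussianPDFReal, NNReal.coe_one, mul_one, sub_zero]
  congr 1
  ring

lemma gaussianReal_eq : gaussianReal 0 1 = volume.withDensity (gaussianPDF 0 1) :=
  gaussianReal_of_var_ne_zero 0 one_ne_zero

lemma integral_gaussianReal_eq (g : ℝ → ℝ) :
    ∫ x, g x ∂(gaussianReal 0 1) = ∫ x, gaussianPDFReal 0 1 x * g x := by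
  rw [gaussianReal_eq]
  have h : gaussianPDF 0 1 = fun x => ((Real.toNNReal (gaussianPDFReal 0 1 x) : ℝ≥0) : ℝ≥0∞) := by
    funext x; rfl
  rw [h, integral_withDensity_eq_integral_smul
      (by exact (measurable_gaussianPDFReal 0 1).real_toNNReal) g]
  congr 1; funext x
  rw [NNReal.smul_def, smul_eq_mul, Real.coe_toNNReal _ (gaussianPDFReal_nonneg 0 1 x)]

lemma integrable_gaussianReal_iff (g : ℝ → ℝ) :
    Integrable g (gaussianReal 0 1) ↔
      Integrable (fun x => g x * gaussianPDFReal 0 1 x) volume := by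
  rw [gaussianReal_eq]
  rw [integrable_withDensity_iff (measurable_gaussianPDF 0 1)
      (ae_of_all _ fun x => ENNReal.ofReal_lt_top)]
  have : (fun x => g x * (gaussianPDF 0 1 x).toReal)
      = fun x => g x * gaussianPDFReal 0 1 x := by
    funext x
    rw [gaussianPDF, ENNReal.toReal_ofReal (gaussianPDFReal_nonneg 0 1 x)]
  rw [this]

lemma integrable_abs_pow_gaussian (n : ℕ) :
    Integrable (fun x : ℝ => |x| ^ n) (gaussianReal 0 1) := by
  rw [integrable_gaussianReal_iff]
  have h0 : Integrable (fun x : ℝ => x ^ ((n:ℝ)) * rexp (-(1/2) * x ^ 2)) volume :=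
    integrable_rpow_mul_exp_neg_mul_sq (by norm_num)
      (lt_of_lt_of_le neg_one_lt_zero (Nat.cast_nonneg n))
  have h1 : Integrable (fun x : ℝ => (√(2 * π))⁻¹ * |x ^ ((n:ℝ)) * rexp (-(1/2) * x ^ 2)|) volume :=
    (h0.abs.const_mul _)
  refine h1.mono'
    (((measurable_id.abs.pow_const n).mul (measurable_gaussianPDFReal 0 1)).aestronglyMeasurable)
    (ae_of_all _ fun x => ?_)
  simp only [norm_eq_abs]
  rw [abs_of_nonneg (mul_nonneg (by positivity) (gaussianPDFReal_nonneg 0 1 x))]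
  rw [gaussian_pdf_eq, Real.rpow_natCast, abs_mul, abs_pow,
      abs_of_nonneg (le_of_lt (exp_pos _))]
  have h2 : |x| ^ n * ((√(2 * π))⁻¹ * rexp (-(1/2) * x ^ 2))
      = (√(2 * π))⁻¹ * (|x| ^ n * rexp (-(1/2) * x ^ 2)) := by ring
  rw [h2]

lemma gaussian_pdf_even (x : ℝ) : gaussianPDFReal 0 1 (-x) = gaussianPDFReal 0 1 x := by
  rw [gaussian_pdf_eq, gaussian_pdf_eq, neg_sq]

lemma integral_id_gaussian : ∫ x, x ∂(gaussianReal 0 1) = 0 := by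
  rw [integral_gaussianReal_eq]
  set h : ℝ → ℝ := fun x => gaussianPDFReal 0 1 x * x with hh
  have hmap : Measure.map Neg.neg (volume : Measure ℝ) = volume := Measure.map_neg_eq_self _
  have hasm : AEStronglyMeasurable h (Measure.map Neg.neg (volume : Measure ℝ)) := by
    rw [hmap]
    exact ((measurable_gaussianPDFReal 0 1).mul measurable_id).aestronglyMeasurable
  have hneg : ∫ x, h x = ∫ x, h (-x) := by
    conv_lhs => rw [← hmap]
    exact integral_map measurable_neg.aemeasurable hasm
  have hodd : (fun x => h (-x)) = fun x => -h x := by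
    funext x; simp only [hh, gaussian_pdf_even, mul_neg]
  have hkey : ∫ x, h x = - ∫ x, h x := by
    nth_rewrite 1 [hneg]
    rw [hodd, integral_neg]
  linarith

lemma integral_sq_gaussian : ∫ x, x ^ 2 ∂(gaussianReal 0 1) = 1 := by
  rw [integral_gaussianReal_eq]
  have heven : (fun x : ℝ => gaussianPDFReal 0 1 x * x ^ 2)
      = fun x => gaussianPDFReal 0 1 |x| * |x| ^ 2 := by
    funext x
    rcases abs_choice x with h | h
    · rw [h]
    · rw [h, gaussian_pdf_even, neg_sq]
  rw [heven, integral_comp_abs (f := fun x => gaussianPDFReal 0 1 x * x ^ 2)]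
  have hIoi : ∫ x in Ioi (0:ℝ), gaussianPDFReal 0 1 x * x ^ 2
      = (√(2 * π))⁻¹ * ∫ x in Ioi (0:ℝ), x ^ ((2:ℝ)) * rexp (-(1/2) * x ^ ((2:ℝ))) := by
    rw [← integral_const_mul]
    refine setIntegral_congr_fun measurableSet_Ioi (fun x hx => ?_)
    rw [gaussian_pdf_eq, show ((2:ℝ)) = ((2:ℕ):ℝ) from by norm_num, Real.rpow_natCast]
    ring
  rw [hIoi, integral_rpow_mul_exp_neg_mul_rpow (by norm_num) (by norm_num) (by norm_num)]
  have hgamma : Real.Gamma ((2 + 1) / 2) = √π / 2 := by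
    have h32 : ((2:ℝ) + 1) / 2 = 1/2 + 1 := by norm_num
    rw [h32, Real.Gamma_add_one (by norm_num), Real.Gamma_one_half_eq]
    ring
  rw [hgamma]
  have hb : ((1:ℝ)/2) ^ (-((2:ℝ) + 1) / 2) = 2 * √2 := by
    rw [show -((2:ℝ)+1)/2 = -(3/2) by norm_num]
    rw [Real.rpow_neg (by norm_num)]
    rw [show ((1:ℝ)/2) = 2⁻¹ by norm_num, Real.inv_rpow (by norm_num), inv_inv]
    rw [show (3:ℝ)/2 = 1 + 1/2 by norm_num, Real.rpow_add (by norm_num), Real.rpow_one,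
        ← Real.sqrt_eq_rpow]
  rw [hb]
  rw [Real.sqrt_mul (by norm_num) π]
  have h2 : √2 ≠ 0 := by positivity
  have hπ : √π ≠ 0 := by positivity
  field_simp
  try ring

end AuxLemmas

/-- **Bias of the Gaussian-smoothing two-point gradient estimate.** If `f` is
three times continuously differentiable with all third-order partial
derivatives bounded by `M`, and `Δ` is a `d`-dimensional standard Gaussian
vector (i.i.d. standard normal coordinates), then the two-point estimate
`Δ (f(x + ηΔ) - f(x - ηΔ))/(2η)` has bias at most `C η²` in the sup-norm,
where `C = (M/6) E[‖Δ‖₁³ ‖Δ‖_∞]`. The sup-norm bound is stated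
coordinatewise, and `‖Δ‖_∞` is expressed through the sup-norm on `Fin d → ℝ`. -/
theorem gaussian_smoothing_bias
    {d : ℕ} {Ω : Type*} {mΩ : MeasurableSpace Ω}
    (μ : Measure Ω) [IsProbabilityMeasure μ]
    (f : EuclideanSpace ℝ (Fin d) → ℝ)
    (hf : ContDiff ℝ 3 f)
    (M : ℝ) (hM : 0 < M)
    -- all third-order partial derivatives are bounded by `M`
    (hM3 : ∀ x : EuclideanSpace ℝ (Fin d), ∀ i j k : Fin d,
      |iteratedFDeriv ℝ 3 f x
        ![EuclideanSpace.single i 1, EuclideanSpace.single j 1,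
          EuclideanSpace.single k 1]| ≤ M)
    (η : ℝ) (hη : 0 < η)
    -- `Δ` is a standard Gaussian vector: measurable, with independent
    -- standard normal coordinates
    (Δ : Ω → EuclideanSpace ℝ (Fin d))
    (hΔmeas : Measurable Δ)
    (hΔlaw : ∀ i, μ.map (fun ω => Δ ω i) = gaussianReal 0 1)
    (hΔindep : iIndepFun (fun i ω => Δ ω i) μ)
    (C : ℝ)
    (hC : C = M / 6 *
      ∫ ω, (∑ i, |Δ ω i|) ^ 3 * ‖(fun i => Δ ω i : Fin d → ℝ)‖ ∂μ) :
    ∀ x : EuclideanSpace ℝ (Fin d), ∀ i : Fin d,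
      |(∫ ω, Δ ω i * ((f (x + η • Δ ω) - f (x - η • Δ ω)) / (2 * η)) ∂μ)
          - gradient f x i|
        ≤ C * η ^ 2 := by
  intro x i
  have measc : ∀ j : Fin d, Measurable fun ω => Δ ω j := fun j =>
    (measurable_pi_apply j).comp (Measurable.comp (WithLp.measurable_ofLp _ _) hΔmeas)
  -- transferred moments
  have habs : ∀ (n : ℕ) (j : Fin d), Integrable (fun ω => |Δ ω j| ^ n) μ := by
    intro n j
    have h := integrable_abs_pow_gaussian n
    rw [← hΔlaw j] at h
    exact (integrable_map_measure (Measurable.aestronglyMeasurable (measurable_id.abs.pow_const n))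
      (measc j).aemeasurable).mp h
  have hid : ∀ j : Fin d, Integrable (fun ω => Δ ω j) μ := by
    intro j
    have h : Integrable (fun y : ℝ => y) (gaussianReal 0 1) := by
      have := integrable_abs_pow_gaussian 1
      simp only [pow_one] at this
      exact this.mono' measurable_id.aestronglyMeasurable
        (ae_of_all _ fun y => by simp)
    rw [← hΔlaw j] at h
    exact (integrable_map_measure measurable_id.aestronglyMeasurable
      (measc j).aemeasurable).mp h
  have hsq : ∀ j : Fin d, Integrable (fun ω => Δ ω j ^ 2) μ := by
    intro j
    have h : Integrable (fun y : ℝ => y ^ 2) (gaussianReal 0 1) := by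
      have := integrable_abs_pow_gaussian 2
      refine this.mono' (measurable_id.pow_const 2).aestronglyMeasurable (ae_of_all _ fun y => by simp [sq_abs, abs_pow])
    rw [← hΔlaw j] at h
    exact (integrable_map_measure (Measurable.aestronglyMeasurable (measurable_id.pow_const 2))
      (measc j).aemeasurable).mp h
  have hmean : ∀ j : Fin d, ∫ ω, Δ ω j ∂μ = 0 := by
    intro j
    have h := integral_map (μ := μ) (measc j).aemeasurable
      (f := fun y : ℝ => y) measurable_id.aestronglyMeasurable
    rw [hΔlaw j, integral_id_gaussian] at h
    exact h.symm
  have hvar : ∫ ω, Δ ω i * Δ ω i ∂μ = 1 := by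
    have h := integral_map (μ := μ) (measc i).aemeasurable
      (f := fun y : ℝ => y ^ 2) (Measurable.aestronglyMeasurable (measurable_id.pow_const 2))
    rw [hΔlaw i, integral_sq_gaussian] at h
    have : ∀ ω, Δ ω i * Δ ω i = (Δ ω i) ^ 2 := fun ω => (sq (Δ ω i)).symm
    simp_rw [this]
    exact h.symm
  have hcrossint : ∀ j : Fin d, Integrable (fun ω => Δ ω i * Δ ω j) μ := by
    intro j
    by_cases hij : i = j
    · subst hij
      refine (hsq i).mono' ((measc i).mul (measc i)).aestronglyMeasurable
        (ae_of_all _ fun ω => le_of_eq ?_)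
      rw [norm_eq_abs, abs_mul, abs_mul_abs_self, ← sq]
    · have hind : IndepFun (fun ω => Δ ω i) (fun ω => Δ ω j) μ :=
        hΔindep.indepFun hij
      have := hind.integrable_mul (hid i) (hid j)
      exact this
  have hcrossval : ∀ j : Fin d, j ≠ i → ∫ ω, Δ ω i * Δ ω j ∂μ = 0 := by
    intro j hji
    have hind : IndepFun (fun ω => Δ ω i) (fun ω => Δ ω j) μ :=
      hΔindep.indepFun (Ne.symm hji)
    have h := hind.integral_fun_mul_eq_mul_integral (hid i).aestronglyMeasurable (hid j).aestronglyMeasurable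
    have h2 : ∫ ω, Δ ω i * Δ ω j ∂μ = (∫ ω, Δ ω i ∂μ) * ∫ ω, Δ ω j ∂μ := h
    rw [h2, hmean i, hmean j, mul_zero]
  -- gradient and fderiv expansion
  set e : Fin d → EuclideanSpace ℝ (Fin d) := fun j => EuclideanSpace.single j (1:ℝ) with he
  set L : EuclideanSpace ℝ (Fin d) →L[ℝ] ℝ := fderiv ℝ f x with hLdef
  have hgrad : gradient f x i = L (e i) := by
    have h1 : L (e i) = (inner ℝ (gradient f x) (e i) : ℝ) := by
      rw [show gradient f x = (InnerProductSpace.toDual ℝ _).symm L from rfl]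
      rw [InnerProductSpace.toDual_symm_apply]
    rw [h1, he]
    rw [EuclideanSpace.inner_single_right]
    simp
  have hLv : ∀ v : EuclideanSpace ℝ (Fin d), L v = ∑ j, v j * L (e j) := by
    intro v
    conv_lhs => rw [eucl_repr v]
    rw [map_sum]
    exact Finset.sum_congr rfl fun j _ => by rw [_root_.map_smul]; simp [he]
  -- abbreviations
  set S : Ω → ℝ := fun ω => ∑ j, |Δ ω j| with hS
  set N : Ω → ℝ := fun ω => ‖(fun j => Δ ω j : Fin d → ℝ)‖ with hN
  set q : Ω → ℝ := fun ω => Δ ω i * ((f (x + η • Δ ω) - f (x - η • Δ ω)) / (2 * η)) with hq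
  set m : Ω → ℝ := fun ω => ∑ j, L (e j) * (Δ ω i * Δ ω j) with hm
  have hSnonneg : ∀ ω, 0 ≤ S ω := fun ω => Finset.sum_nonneg fun j _ => abs_nonneg _
  have hNnonneg : ∀ ω, 0 ≤ N ω := fun ω => norm_nonneg _
  have hNleS : ∀ ω, N ω ≤ S ω := by
    intro ω
    refine (pi_norm_le_iff_of_nonneg (hSnonneg ω)).mpr fun j => ?_
    rw [Real.norm_eq_abs]
    exact Finset.single_le_sum (f := fun k => |Δ ω k|) (fun k _ => abs_nonneg _)
      (Finset.mem_univ j)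
  have hiNle : ∀ ω, |Δ ω i| ≤ N ω := by
    intro ω
    have := norm_le_pi_norm (fun j => Δ ω j : Fin d → ℝ) i
    simpa using this
  -- pointwise error bound
  have herr : ∀ ω, |q ω - m ω| ≤ M / 6 * η ^ 2 * (S ω ^ 3 * N ω) := by
    intro ω
    have hkey := key_estimate f hf M hM3 x (Δ ω) hη.le
    have hmL : m ω = Δ ω i * L (Δ ω) := by
      rw [hm]
      simp only []
      rw [hLv (Δ ω), Finset.mul_sum]
      exact Finset.sum_congr rfl fun j _ => by ring
    have h2η : (0:ℝ) < 2 * η := by positivity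
    have hqm : q ω - m ω
        = Δ ω i * ((f (x + η • Δ ω) - f (x - η • Δ ω) - 2 * η * L (Δ ω)) / (2 * η)) := by
      rw [hq, hmL]
      simp only []
      field_simp
    rw [hqm, abs_mul, abs_div, abs_of_pos h2η]
    have hb1 : |f (x + η • Δ ω) - f (x - η • Δ ω) - 2 * η * L (Δ ω)| / (2 * η)
        ≤ (M * S ω ^ 3 * η ^ 3 / 3) / (2 * η) :=
      (div_le_div_iff_of_pos_right h2η).mpr hkey
    have heq2 : N ω * ((M * S ω ^ 3 * η ^ 3 / 3) / (2 * η))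
        = M / 6 * η ^ 2 * (S ω ^ 3 * N ω) := by
      field_simp
      ring
    calc |Δ ω i| * (|f (x + η • Δ ω) - f (x - η • Δ ω) - 2 * η * L (Δ ω)| / (2 * η))
        ≤ N ω * ((M * S ω ^ 3 * η ^ 3 / 3) / (2 * η)) :=
          mul_le_mul (hiNle ω) hb1 (by positivity) (hNnonneg ω)
      _ = M / 6 * η ^ 2 * (S ω ^ 3 * N ω) := heq2
  -- measurability
  have hSmeas : Measurable S := Finset.measurable_sum _ fun j _ => (measc j).abs
  have hNmeas : Measurable N := (measurable_pi_lambda _ measc).norm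
  have hqmeas : Measurable q := by
    have hplus : Measurable fun ω => f (x + η • Δ ω) :=
      hf.continuous.measurable.comp ((hΔmeas.const_smul η).const_add x)
    have hminus : Measurable fun ω => f (x - η • Δ ω) :=
      hf.continuous.measurable.comp (Measurable.const_sub (hΔmeas.const_smul η) x)
    exact (measc i).mul ((hplus.sub hminus).div_const _)
  have hmmeas : Measurable m :=
    Finset.measurable_sum _ fun j _ => ((measc i).mul (measc j)).const_mul _
  -- integrability of the dominating function
  have hd0 : 0 < d := i.pos
  have hbound_int : Integrable (fun ω => S ω ^ 3 * N ω) μ := by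
    have hdom : Integrable (fun ω => (d:ℝ) ^ 3 * ∑ j, |Δ ω j| ^ 4) μ :=
      (integrable_finset_sum _ fun j _ => habs 4 j).const_mul _
    refine hdom.mono' ((hSmeas.pow_const 3).mul hNmeas).aestronglyMeasurable
      (ae_of_all _ fun ω => ?_)
    rw [Real.norm_eq_abs,
      abs_of_nonneg (mul_nonneg (pow_nonneg (hSnonneg ω) 3) (hNnonneg ω))]
    have hps := pow_sum_div_card_le_sum_pow (f := fun k => |Δ ω k|)
      (s := Finset.univ) (fun k _ => abs_nonneg _) 3
    rw [Finset.card_univ, Fintype.card_fin] at hps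
    rw [div_le_iff₀ (by positivity : (0:ℝ) < (d:ℝ) ^ 3)] at hps
    calc S ω ^ 3 * N ω ≤ S ω ^ 3 * S ω :=
          mul_le_mul_of_nonneg_left (hNleS ω) (pow_nonneg (hSnonneg ω) 3)
      _ = S ω ^ (3 + 1) := by ring
      _ ≤ (∑ j, |Δ ω j| ^ (3 + 1)) * (d:ℝ) ^ 3 := hps
      _ = (d:ℝ) ^ 3 * ∑ j, |Δ ω j| ^ 4 := by rw [mul_comm]
  have herr_int : Integrable (fun ω => q ω - m ω) μ := by
    refine (hbound_int.const_mul (M / 6 * η ^ 2)).mono'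
      (hqmeas.sub hmmeas).aestronglyMeasurable (ae_of_all _ fun ω => ?_)
    rw [Real.norm_eq_abs]
    exact herr ω
  have hm_int : Integrable m μ :=
    integrable_finset_sum _ fun j _ => (hcrossint j).const_mul _
  have hq_int : Integrable q μ := by
    have h1 := hm_int.add herr_int
    have h2 : (fun ω => m ω + (q ω - m ω)) = q := by funext ω; ring
    have h3 : (m + fun ω => q ω - m ω) = q := by
      funext ω; simp only [Pi.add_apply]; ring
    rwa [h3] at h1
  have hint_m : ∫ ω, m ω ∂μ = L (e i) := by
    have h1 : ∫ ω, m ω ∂μ = ∑ j, ∫ ω, L (e j) * (Δ ω i * Δ ω j) ∂μ :=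
      integral_finset_sum _ fun j _ => (hcrossint j).const_mul _
    rw [h1]
    have h2 : ∀ j, ∫ ω, L (e j) * (Δ ω i * Δ ω j) ∂μ
        = L (e j) * ∫ ω, Δ ω i * Δ ω j ∂μ := fun j => integral_const_mul _ _
    rw [Finset.sum_congr rfl fun j _ => h2 j]
    rw [Finset.sum_eq_single i
      (fun j _ hji => by rw [hcrossval j hji, mul_zero])
      (fun h => absurd (Finset.mem_univ i) h)]
    rw [hvar, mul_one]
  have hsplit : (∫ ω, q ω ∂μ) - gradient f x i = ∫ ω, (q ω - m ω) ∂μ := by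
    rw [integral_sub hq_int hm_int, hgrad, hint_m]
  rw [hsplit]
  calc |∫ ω, (q ω - m ω) ∂μ| ≤ ∫ ω, |q ω - m ω| ∂μ := by
        simpa [Real.norm_eq_abs] using
          norm_integral_le_integral_norm (μ := μ) (fun ω => q ω - m ω)
    _ ≤ ∫ ω, M / 6 * η ^ 2 * (S ω ^ 3 * N ω) ∂μ :=
        integral_mono herr_int.abs (hbound_int.const_mul _) (fun ω => herr ω)
    _ = M / 6 * η ^ 2 * ∫ ω, S ω ^ 3 * N ω ∂μ := integral_const_mul _ _
    _ = C * η ^ 2 := by rw [hC]; ring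
end
end
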